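/- Let x, y be points in the closed unit ball of ℝ^d and ε ∈ (0,1]. Define the shrink-lift transformation x↑ := (εx; √(1 - ‖εx‖²)) ∈ ℝ^{d+1}, a point on the unit sphere S^{d+1}. Then the angle θ between x↑ and y↑ satisfies θ = 2·arcsin((ε/2)·√(‖x-y‖² + e(ε,x,y))), where e(ε,x,y) = (√(1/ε² - ‖x‖²) - √(1/ε² - ‖y‖²))². In particular θ ≥ 2·arcsin((ε/2)·‖x-y‖). -/

import Mathlib

set_option maxHeartbeats 1000000

noncomputable def shrinkLift (d : ℕ) (ε : ℝ) (x : EuclideanSpace ℝ (Fin d)) :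
    EuclideanSpace ℝ (Fin (d + 1)) :=
  WithLp.toLp 2 (fun i : Fin (d + 1) => if h : (i : ℕ) < d then ε * x ⟨i, h⟩ else Real.sqrt (1 - ε ^ 2 * ‖x‖ ^ 2))

lemma inner_shrinkLift (d : ℕ) (ε : ℝ) (x y : EuclideanSpace ℝ (Fin d)) :
    (inner ℝ (shrinkLift d ε x) (shrinkLift d ε y) : ℝ) =
      ε ^ 2 * (inner ℝ x y : ℝ) +
        Real.sqrt (1 - ε ^ 2 * ‖x‖ ^ 2) * Real.sqrt (1 - ε ^ 2 * ‖y‖ ^ 2) := by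
  simp only [PiLp.inner_apply, RCLike.inner_apply, conj_trivial]
  rw [Fin.sum_univ_castSucc]
  simp [shrinkLift, Fin.is_lt, Finset.mul_sum]
  ring_nf

lemma sq_le_one_aux {ε r : ℝ} (hε0 : 0 < ε) (hε : ε ≤ 1) (hr0 : 0 ≤ r) (hr : r ≤ 1) :
    ε ^ 2 * r ^ 2 ≤ 1 := by
  have h1 : ε ^ 2 ≤ 1 := by nlinarith
  have h2 : r ^ 2 ≤ 1 := by nlinarith
  calc ε ^ 2 * r ^ 2 ≤ 1 * 1 := mul_le_mul h1 h2 (sq_nonneg r) zero_le_one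
  _ = 1 := one_mul 1

lemma norm_shrinkLift (d : ℕ) {ε : ℝ} (x : EuclideanSpace ℝ (Fin d)) (hx : ‖x‖ ≤ 1)
    (hε0 : 0 < ε) (hε : ε ≤ 1) : ‖shrinkLift d ε x‖ = 1 := by
  have h1 : ε ^ 2 * ‖x‖ ^ 2 ≤ 1 := sq_le_one_aux hε0 hε (norm_nonneg x) hx
  have := inner_shrinkLift d ε x x
  rw [real_inner_self_eq_norm_sq, real_inner_self_eq_norm_sq,
    Real.mul_self_sqrt (by linarith)] at this
  nlinarith [norm_nonneg (shrinkLift d ε x)]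

lemma eps_sqrt_aux {ε r : ℝ} (hε0 : 0 < ε) :
    ε * Real.sqrt (1 / ε ^ 2 - r ^ 2) = Real.sqrt (1 - ε ^ 2 * r ^ 2) := by
  rw [← Real.sqrt_sq hε0.le, ← Real.sqrt_mul (by positivity)]
  congr 1
  field_simp
  rw [Real.sq_sqrt (by positivity)]

lemma arccos_eq_two_arcsin {t s : ℝ} (hs0 : 0 ≤ s) (hs1 : s ≤ 1)
    (ht : t = 1 - 2 * s ^ 2) : Real.arccos t = 2 * Real.arcsin s := by
  apply Real.injOn_cos
  · exact ⟨Real.arccos_nonneg t, Real.arccos_le_pi t⟩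
  · have h1 := Real.arcsin_nonneg.2 hs0
    have h2 := Real.arcsin_le_pi_div_two s
    constructor <;> linarith
  · rw [Real.cos_arccos (by nlinarith) (by nlinarith), Real.cos_two_mul, Real.cos_arcsin,
      Real.sq_sqrt (by nlinarith), ht]
    ring

theorem stmt_2 (d : ℕ) (x y : EuclideanSpace ℝ (Fin d)) (hx : ‖x‖ ≤ 1) (hy : ‖y‖ ≤ 1)
    (ε : ℝ) (hε0 : 0 < ε) (hε : ε ≤ 1) :
    InnerProductGeometry.angle (shrinkLift d ε x) (shrinkLift d ε y) =
      2 * Real.arcsin (ε / 2 *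
        Real.sqrt (‖x - y‖ ^ 2 +
          (Real.sqrt (1 / ε ^ 2 - ‖x‖ ^ 2) - Real.sqrt (1 / ε ^ 2 - ‖y‖ ^ 2)) ^ 2)) ∧
    2 * Real.arcsin (ε / 2 * ‖x - y‖) ≤
      InnerProductGeometry.angle (shrinkLift d ε x) (shrinkLift d ε y) := by
  have hxA : ε ^ 2 * ‖x‖ ^ 2 ≤ 1 := sq_le_one_aux hε0 hε (norm_nonneg x) hx
  have hyB : ε ^ 2 * ‖y‖ ^ 2 ≤ 1 := sq_le_one_aux hε0 hε (norm_nonneg y) hy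
  obtain ⟨A, hA⟩ : ∃ A, Real.sqrt (1 - ε ^ 2 * ‖x‖ ^ 2) = A := ⟨_, rfl⟩
  obtain ⟨B, hB⟩ : ∃ B, Real.sqrt (1 - ε ^ 2 * ‖y‖ ^ 2) = B := ⟨_, rfl⟩
  obtain ⟨C, hCe⟩ : ∃ C, Real.sqrt (1 / ε ^ 2 - ‖x‖ ^ 2) = C := ⟨_, rfl⟩
  obtain ⟨D, hDe⟩ : ∃ D, Real.sqrt (1 / ε ^ 2 - ‖y‖ ^ 2) = D := ⟨_, rfl⟩
  have hεC : ε * C = A := by rw [← hCe, ← hA]; exact eps_sqrt_aux hε0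
  have hεD : ε * D = B := by rw [← hDe, ← hB]; exact eps_sqrt_aux hε0
  have hA2 : A ^ 2 = 1 - ε ^ 2 * ‖x‖ ^ 2 := by rw [← hA]; exact Real.sq_sqrt (by linarith)
  have hB2 : B ^ 2 = 1 - ε ^ 2 * ‖y‖ ^ 2 := by rw [← hB]; exact Real.sq_sqrt (by linarith)
  obtain ⟨Q, hQ⟩ : ∃ Q, ‖x - y‖ ^ 2 + (C - D) ^ 2 = Q := ⟨_, rfl⟩
  have hQ0 : 0 ≤ Q := by rw [← hQ]; positivity
  obtain ⟨s, hse⟩ : ∃ s, ε / 2 * Real.sqrt Q = s := ⟨_, rfl⟩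
  have hs0 : 0 ≤ s := by rw [← hse]; positivity
  have hsQ : s ^ 2 = ε ^ 2 / 4 * Q := by
    rw [← hse, mul_pow, Real.sq_sqrt hQ0]; ring
  have hnx : ‖shrinkLift d ε x‖ = 1 := norm_shrinkLift d x hx hε0 hε
  have hny : ‖shrinkLift d ε y‖ = 1 := norm_shrinkLift d y hy hε0 hε
  obtain ⟨ip, hipe⟩ : ∃ ip, (inner ℝ x y : ℝ) = ip := ⟨_, rfl⟩
  have hip : (inner ℝ (shrinkLift d ε x) (shrinkLift d ε y) : ℝ) = ε ^ 2 * ip + A * B := by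
    rw [← hipe, ← hA, ← hB]; exact inner_shrinkLift d ε x y
  have hnsub : ‖x - y‖ ^ 2 = ‖x‖ ^ 2 - 2 * ip + ‖y‖ ^ 2 := by
    rw [← hipe, @norm_sub_sq_real]
  have hkey : ε ^ 2 * ip + A * B = 1 - 2 * s ^ 2 := by
    have h2 : ε ^ 2 * (C - D) ^ 2 = (A - B) ^ 2 := by
      have h3 : ε ^ 2 * (C - D) ^ 2 = (ε * C - ε * D) ^ 2 := by ring
      rw [h3, hεC, hεD]
    nlinarith [hsQ, hQ, h2, hA2, hB2, hnsub]
  have ht1 : |ε ^ 2 * ip + A * B| ≤ 1 := by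
    have h := abs_real_inner_le_norm (shrinkLift d ε x) (shrinkLift d ε y)
    rw [hip, hnx, hny] at h; simpa using h
  have hs1 : s ≤ 1 := by nlinarith [abs_le.1 ht1]
  have hangle : InnerProductGeometry.angle (shrinkLift d ε x) (shrinkLift d ε y) =
      Real.arccos (ε ^ 2 * ip + A * B) := by
    rw [InnerProductGeometry.angle, hip, hnx, hny]
    norm_num
  have hmain := arccos_eq_two_arcsin hs0 hs1 hkey
  rw [hangle, hmain, hCe, hDe, hQ, hse]
  refine ⟨rfl, ?_⟩
  have h1 : ε / 2 * ‖x - y‖ ≤ s := by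
    rw [← hse]
    apply mul_le_mul_of_nonneg_left _ (by positivity)
    rw [← Real.sqrt_sq (norm_nonneg (x - y))]
    apply Real.sqrt_le_sqrt
    nlinarith [sq_nonneg (C - D), hQ]
  have h2 := Real.monotone_arcsin h1
  linarith
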